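/- arXiv:1802.08641 — 2 statements merged into one kernel-verified Lean document; each statement's English description precedes it below -/
import Mathlib

section
/- Let M be an MSC over P and Σ, let p, q ∈ P, let π, π' ∈ Π_{p,q}, and let e, f ∈ E_q with e →* f. If f_{π,π'}(e) ∈ E_q and f_{π,π'}(f) ∈ E_q (i.e., neither equals ⊥ nor ⊤), then f_{π,π'}(e) ≤ f_{π,π'}(f). -/
namespace Gossip

/-- Events extended with bottom and top elements. -/
inductive ExtEv (E : Type) : Type where
  | bot : ExtEv E
  | evt (e : E) : ExtEv E
  | top : ExtEv E

/-- A message sequence chart (MSC) over processes `P`, alphabet `A`,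
with (finite, nonempty) set of events `E`. -/
structure MSC (P A E : Type) : Type where
  fintypeE : Fintype E
  nonemptyE : Nonempty E
  loc : E → P
  lab : E → A
  /-- process successor relation `→` -/
  next : E → E → Prop
  /-- message relation `◁` -/
  msg : E → E → Prop
  next_loc : ∀ {e f : E}, next e f → loc e = loc f
  next_irrefl : ∀ e : E, ¬ next e e
  next_right_unique : ∀ {e f f' : E}, next e f → next e f' → f = f'
  next_left_unique : ∀ {e e' f : E}, next e f → next e' f → e = e'
  next_total : ∀ e f : E, loc e = loc f →
      Relation.ReflTransGen next e f ∨ Relation.ReflTransGen next f e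
  msg_loc : ∀ {e f : E}, msg e f → loc e ≠ loc f
  /-- every event belongs to at most one pair of `◁` -/
  msg_unique : ∀ {e f e' f' : E}, msg e f → msg e' f' →
      (e = e' ∨ e = f' ∨ f = e' ∨ f = f') → e = e' ∧ f = f'
  fifo : ∀ {e f e' f' : E}, msg e f → msg e' f' → loc e = loc e' → loc f = loc f' →
      (Relation.ReflTransGen next e e' ↔ Relation.ReflTransGen next f f')
  /-- `≤ = (→ ∪ ◁)*` is a partial order -/
  causal_antisymm : ∀ {e f : E},
      Relation.ReflTransGen (fun x y => next x y ∨ msg x y) e f →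
      Relation.ReflTransGen (fun x y => next x y ∨ msg x y) f e → e = f

namespace MSC

variable {P A E B : Type}

/-- the causal order `≤ = (→ ∪ ◁)*` -/
def le (M : MSC P A E) : E → E → Prop :=
  Relation.ReflTransGen (fun x y => M.next x y ∨ M.msg x y)

/-- the strict causal order `<` -/
def lt (M : MSC P A E) (e f : E) : Prop := M.le e f ∧ e ≠ f

/-- `→*` -/
def nextStar (M : MSC P A E) : E → E → Prop := Relation.ReflTransGen M.next

/-- the causal order extended to `E ∪ {⊥,⊤}` with `⊥ < e < ⊤` -/
def extLe (M : MSC P A E) : ExtEv E → ExtEv E → Prop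
  | .bot, _ => True
  | _, .top => True
  | .evt e, .evt f => M.le e f
  | _, _ => False

def extLt (M : MSC P A E) (x y : ExtEv E) : Prop := M.extLe x y ∧ x ≠ y

/-- replace the labelling of an MSC (e.g. to pair it with an extra labelling) -/
def relabel (M : MSC P A E) (μ : E → B) : MSC P B E where
  fintypeE := M.fintypeE
  nonemptyE := M.nonemptyE
  loc := M.loc
  lab := μ
  next := M.next
  msg := M.msg
  next_loc := M.next_loc
  next_irrefl := M.next_irrefl
  next_right_unique := M.next_right_unique
  next_left_unique := M.next_left_unique
  next_total := M.next_total
  msg_loc := M.msg_loc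
  msg_unique := M.msg_unique
  fifo := M.fifo
  causal_antisymm := M.causal_antisymm

end MSC

/-- letters of path expressions: `→`, `→*`, `p▷q`, `⟨a⟩` -/
inductive PathLetter (P A : Type) : Type where
  | next : PathLetter P A
  | nextStar : PathLetter P A
  | msg (p q : P) : PathLetter P A
  | lab (a : A) : PathLetter P A

/-- path expressions: finite words over `Γ` -/
abbrev PathExpr (P A : Type) := List (PathLetter P A)

variable {P A E : Type}

def letterSem (M : MSC P A E) : PathLetter P A → E → E → Prop
  | .next => M.next
  | .nextStar => M.nextStar
  | .msg p q => fun e f => M.loc e = p ∧ M.loc f = q ∧ M.msg e f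
  | .lab a => fun e f => e = f ∧ M.lab e = a

/-- `⟦π⟧` -/
def pathSem (M : MSC P A E) : PathExpr P A → E → E → Prop
  | [] => fun e f => e = f
  | l :: π => fun e g => ∃ f, letterSem M l e f ∧ pathSem M π f g

def letterComp : PathLetter P A → P → P → Prop
  | .msg p q => fun x y => x = p ∧ y = q
  | _ => fun x y => x = y

/-- `Comp(π)`; `π ∈ Π_{p,q}` iff `pcomp π p q` -/
def pcomp : PathExpr P A → P → P → Prop
  | [] => fun x y => x = y
  | l :: π => fun x z => ∃ y, letterComp l x y ∧ pcomp π y z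

/-- `IsLast M π e x` holds iff `x = last_π(e)` (with `x = ⊥` iff no `π`-path into `e`). -/
def IsLast (M : MSC P A E) (π : PathExpr P A) (e : E) : ExtEv E → Prop
  | .bot => ∀ f, ¬ pathSem M π f e
  | .evt g => pathSem M π g e ∧ ∀ f, pathSem M π f e → M.le f g
  | .top => False

/-- `IsFirst M π e x` holds iff `x = first_π(e)` (with `x = ⊤` iff no `π`-path out of `e`). -/
def IsFirst (M : MSC P A E) (π : PathExpr P A) (e : E) : ExtEv E → Prop
  | .top => ∀ f, ¬ pathSem M π e f
  | .evt g => pathSem M π e g ∧ ∀ f, pathSem M π e f → M.le g f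
  | .bot => False

/-- `IsFa M π π' e x` holds iff `x = f_{π,π'}(e) = first_{π'}(last_π(e))`, with
`first_{π'}(⊥) := ⊥`. -/
def IsFa (M : MSC P A E) (π π' : PathExpr P A) (e : E) (x : ExtEv E) : Prop :=
  (IsLast M π e ExtEv.bot ∧ x = ExtEv.bot) ∨
    ∃ g, IsLast M π e (ExtEv.evt g) ∧ IsFirst M π' g x

/-- `IsLastProc M p e x` holds iff `x = last_p(e)`, the maximal event of process `p`
strictly below `e` (`⊥` if none). -/
def IsLastProc (M : MSC P A E) (p : P) (e : E) : ExtEv E → Prop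
  | .bot => ∀ f, M.loc f = p → ¬ M.lt f e
  | .evt g => M.loc g = p ∧ M.lt g e ∧ ∀ f, M.loc f = p → M.lt f e → M.le f g
  | .top => False

/-- `π ≼_e π'`, i.e. `last_π(e) ≤ last_{π'}(e)` -/
def ple (M : MSC P A E) (π π' : PathExpr P A) (e : E) : Prop :=
  ∃ x y, IsLast M π e x ∧ IsLast M π' e y ∧ M.extLe x y

def gossipSuffix : P → List P → PathExpr P A
  | _, [] => []
  | p, q :: w => PathLetter.msg p q :: PathLetter.nextStar :: gossipSuffix q w

/-- `π_w` for `w = p :: rest` -/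
def gossipExpr (p : P) (w : List P) : PathExpr P A :=
  match w with
  | [] => [PathLetter.next, PathLetter.nextStar]
  | _ :: _ => PathLetter.nextStar :: gossipSuffix p w

/-- `π ∈ Π^gossip` -/
def IsGossip (π : PathExpr P A) : Prop :=
  ∃ (p : P) (w : List P), (p :: w).Nodup ∧ π = gossipExpr p w

/-- actions of a CFM transition -/
inductive CAct (P A Msg : Type) : Type where
  | internal (a : A) : CAct P A Msg
  | send (a : A) (m : Msg) (q : P) : CAct P A Msg
  | recv (a : A) (m : Msg) (q : P) : CAct P A Msg

def CAct.labelOf {P A Msg : Type} : CAct P A Msg → A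
  | .internal a => a
  | .send a _ _ => a
  | .recv a _ _ => a

/-- a communicating finite-state machine over `P` and `A` -/
structure CFM (P A : Type) : Type 1 where
  Msg : Type
  msgFin : Fintype Msg
  S : Type
  sFin : Fintype S
  ι : P → S
  Δ : P → Set (S × CAct P A Msg × S)
  Acc : Set (P → S)
  wf_send : ∀ p s a m q s', (s, CAct.send a m q, s') ∈ Δ p → q ≠ p
  wf_recv : ∀ p s a m q s', (s, CAct.recv a m q, s') ∈ Δ p → q ≠ p

namespace CFM

variable {P A E : Type}

/-- `ρ` is a run of the CFM `C` on the MSC `M` -/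
def IsRun (C : CFM P A) (M : MSC P A E) (ρ : E → C.S × CAct P A C.Msg × C.S) : Prop :=
  (∀ e, ρ e ∈ C.Δ (M.loc e)) ∧
  (∀ e, ((ρ e).2.1).labelOf = M.lab e) ∧
  (∀ e, (¬ ∃ f, M.next f e) → (ρ e).1 = C.ι (M.loc e)) ∧
  (∀ e f, M.next e f → (ρ e).2.2 = (ρ f).1) ∧
  (∀ e, (¬ ∃ f, M.msg e f) → (¬ ∃ f, M.msg f e) → ∃ a, (ρ e).2.1 = CAct.internal a) ∧
  (∀ e f, M.msg e f → ∃ m, (ρ e).2.1 = CAct.send (M.lab e) m (M.loc f) ∧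
      (ρ f).2.1 = CAct.recv (M.lab f) m (M.loc e))

/-- the run `ρ` is accepting -/
def IsAccepting (C : CFM P A) (M : MSC P A E)
    (ρ : E → C.S × CAct P A C.Msg × C.S) : Prop :=
  ∃ s : P → C.S, s ∈ C.Acc ∧ ∀ p,
    ((∃ e, M.loc e = p) → ∃ e, M.loc e = p ∧ (¬ ∃ f, M.next e f) ∧ s p = (ρ e).2.2) ∧
    ((¬ ∃ e, M.loc e = p) → s p = C.ι p)

/-- `M ∈ L(C)` -/
def Accepts (C : CFM P A) (M : MSC P A E) : Prop :=
  ∃ ρ, C.IsRun M ρ ∧ C.IsAccepting M ρ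

/-- deterministic CFMs -/
def Deterministic (C : CFM P A) : Prop :=
  ∀ p s γ₁ s₁ γ₂ s₂, (s, γ₁, s₁) ∈ C.Δ p → (s, γ₂, s₂) ∈ C.Δ p →
    CAct.labelOf γ₁ = CAct.labelOf γ₂ →
    ((∀ a₁ a₂, γ₁ = CAct.internal a₁ → γ₂ = CAct.internal a₂ → s₁ = s₂) ∧
     (∀ a₁ m₁ a₂ m₂ q, γ₁ = CAct.send a₁ m₁ q → γ₂ = CAct.send a₂ m₂ q →
        s₁ = s₂ ∧ m₁ = m₂) ∧
     (∀ a₁ a₂ m q, γ₁ = CAct.recv a₁ m q → γ₂ = CAct.recv a₂ m q → s₁ = s₂))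

end CFM

/-- acceptance of the extended MSC `(M, ξ)` by a CFM over a product alphabet -/
def AcceptsExt {P A E Ξ : Type} (C : CFM P (A × Ξ)) (M : MSC P A E) (ξ : E → Ξ) : Prop :=
  C.Accepts (M.relabel fun e => (M.lab e, ξ e))

/-- apply `μ` to an extended event, sending both `⊥` and `⊤` to `none` -/
def extToOptMap {E Θ : Type} (μ : E → Θ) : ExtEv E → Option Θ
  | .evt g => some (μ g)
  | _ => none

/-- apply `μ` to an extended event, preserving `⊥` and `⊤` -/
def extMap {E Θ : Type} (μ : E → Θ) : ExtEv E → ExtEv Θ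
  | .bot => ExtEv.bot
  | .evt g => ExtEv.evt (μ g)
  | .top => ExtEv.top

/-- formulas of the temporal logic TL -/
inductive TL (P A : Type) : Type where
  | lab (a : A) : TL P A
  | proc (p : P) : TL P A
  | disj (φ ψ : TL P A) : TL P A
  | neg (φ : TL P A) : TL P A
  | co (φ : TL P A) : TL P A
  | tuntil (φ ψ : TL P A) : TL P A
  | tsince (φ ψ : TL P A) : TL P A

/-- `M, e ⊨ φ` -/
def TLsat (M : MSC P A E) : TL P A → E → Prop
  | .lab a, e => M.lab e = a
  | .proc p, e => M.loc e = p
  | .disj φ ψ, e => TLsat M φ e ∨ TLsat M ψ e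
  | .neg φ, e => ¬ TLsat M φ e
  | .co φ, e => ∃ f, ¬ M.le e f ∧ ¬ M.le f e ∧ TLsat M φ f
  | .tuntil φ ψ, e => ∃ f, M.lt e f ∧ TLsat M ψ f ∧ ∀ g, M.lt e g → M.lt g f → TLsat M φ g
  | .tsince φ ψ, e => ∃ f, M.lt f e ∧ TLsat M ψ f ∧ ∀ g, M.lt f g → M.lt g e → TLsat M φ g

section Aux

variable {P A E : Type}

lemma MSC.nextStar_le' (M : MSC P A E) {x y : E} (h : M.nextStar x y) : M.le x y :=
  by
    induction h with
    | refl => exact Relation.ReflTransGen.refl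
    | tail _ hn ih => exact Relation.ReflTransGen.tail ih (Or.inl hn)

lemma MSC.nextStar_antisymm' (M : MSC P A E) {x y : E} (h : M.nextStar x y)
    (h' : M.nextStar y x) : x = y :=
  M.causal_antisymm (M.nextStar_le' h) (M.nextStar_le' h')

lemma MSC.nextStar_loc' (M : MSC P A E) {x y : E} (h : M.nextStar x y) :
    M.loc x = M.loc y := by
  induction h with
  | refl => rfl
  | tail _ h ih => exact ih.trans (M.next_loc h)

lemma MSC.next_mono' (M : MSC P A E) {x x' m m' : E} (hxx : M.nextStar x x')
    (h : M.next x m) (h' : M.next x' m') : M.nextStar m m' := by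
  rcases hxx.cases_head with rfl | ⟨c, hc, hcx'⟩
  · rw [M.next_right_unique h h']; exact Relation.ReflTransGen.refl
  · exact Relation.ReflTransGen.tail (M.next_right_unique h hc ▸ hcx') h'

lemma letter_loc_eq (M : MSC P A E) (l : PathLetter P A) {x m x' m' : E}
    (h1 : letterSem M l x m) (h2 : letterSem M l x' m')
    (hx : M.loc x = M.loc x') : M.loc m = M.loc m' := by
  cases l with
  | next => rw [← M.next_loc h1, ← M.next_loc h2, hx]
  | nextStar => rw [← M.nextStar_loc' h1, ← M.nextStar_loc' h2, hx]
  | lab a => rw [← h1.1, ← h2.1, hx]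
  | msg p q => rw [h1.2.1, h2.2.1]

lemma letter_cross (M : MSC P A E) (l : PathLetter P A) {x m x' m' : E}
    (h1 : letterSem M l x m) (h2 : letterSem M l x' m')
    (hx : M.nextStar x x') (hm : M.nextStar m' m) :
    letterSem M l x' m ∧ letterSem M l x m' := by
  cases l with
  | next =>
      have hmm : m = m' := M.nextStar_antisymm' (M.next_mono' hx h1 h2) hm
      have hxx : x = x' := M.next_left_unique h1 (hmm ▸ h2)
      subst hmm; subst hxx; exact ⟨h1, h1⟩
  | nextStar => exact ⟨h2.trans hm, hx.trans h2⟩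
  | lab a =>
      obtain ⟨rfl, ha⟩ := h1
      obtain ⟨rfl, ha'⟩ := h2
      have : x = x' := M.nextStar_antisymm' hx hm
      subst this; exact ⟨⟨rfl, ha⟩, ⟨rfl, ha⟩⟩
  | msg p' q' =>
      obtain ⟨hxl, hml, hmsg⟩ := h1
      obtain ⟨hxl', hml', hmsg'⟩ := h2
      have hmm : m = m' := by
        refine M.nextStar_antisymm' ?_ hm
        exact (M.fifo hmsg hmsg' (hxl.trans hxl'.symm) (hml.trans hml'.symm)).1 hx
      have := M.msg_unique hmsg hmsg' (Or.inr (Or.inr (Or.inr hmm)))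
      obtain ⟨rfl, rfl⟩ := this
      exact ⟨⟨hxl, hml, hmsg⟩, ⟨hxl, hml, hmsg⟩⟩

lemma path_cross (M : MSC P A E) (π : PathExpr P A) : ∀ {x y x' y' : E},
    pathSem M π x y → pathSem M π x' y' →
    M.nextStar x x' → M.nextStar y' y →
    pathSem M π x' y ∧ pathSem M π x y' := by
  induction π with
  | nil =>
      intro x y x' y' h1 h2 hx hy
      simp only [pathSem] at *
      subst h1; subst h2
      have : x = x' := M.nextStar_antisymm' hx hy
      exact ⟨this.symm, this⟩
  | cons l π ih =>
      intro x y x' y' h1 h2 hx hy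
      obtain ⟨m, hl, hp⟩ := h1
      obtain ⟨m', hl', hp'⟩ := h2
      have hloc : M.loc m = M.loc m' :=
        letter_loc_eq M l hl hl' (M.nextStar_loc' hx)
      rcases M.next_total m m' hloc with hmm | hmm
      · obtain ⟨a, b⟩ := ih hp hp' hmm hy
        exact ⟨⟨m', hl', a⟩, ⟨m, hl, b⟩⟩
      · obtain ⟨c, d⟩ := letter_cross M l hl hl' hx hmm
        exact ⟨⟨m, c, hp⟩, ⟨m', d, hp'⟩⟩

lemma pathSem_loc_bwd (M : MSC P A E) (π : PathExpr P A) : ∀ {x y : E} {r s : P},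
    pathSem M π x y → pcomp π r s → M.loc y = s → M.loc x = r := by
  induction π with
  | nil =>
      intro x y r s h1 h2 hy
      simp only [pathSem, pcomp] at *
      subst h1; subst h2; exact hy
  | cons l π ih =>
      intro x y r s h1 h2 hy
      obtain ⟨m, hl, hp⟩ := h1
      obtain ⟨t, hlc, hpc⟩ := h2
      have hm : M.loc m = t := ih hp hpc hy
      cases l with
      | next => rw [M.next_loc hl, hm, ← hlc]
      | nextStar => rw [M.nextStar_loc' hl, hm, ← hlc]
      | lab a => rw [hl.1, hm, ← hlc]
      | msg p' q' => rw [hl.1, hlc.1]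

lemma pathSem_loc_fwd (M : MSC P A E) (π : PathExpr P A) : ∀ {x y : E} {r s : P},
    pathSem M π x y → pcomp π r s → M.loc x = r → M.loc y = s := by
  induction π with
  | nil =>
      intro x y r s h1 h2 hx
      simp only [pathSem, pcomp] at *
      subst h1; subst h2; exact hx
  | cons l π ih =>
      intro x y r s h1 h2 hx
      obtain ⟨m, hl, hp⟩ := h1
      obtain ⟨t, hlc, hpc⟩ := h2
      refine ih hp hpc ?_
      cases l with
      | next => rw [← M.next_loc hl, hx]; exact hlc
      | nextStar => rw [← M.nextStar_loc' hl, hx]; exact hlc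
      | lab a => rw [← hl.1, hx]; exact hlc
      | msg p' q' => rw [hl.2.1, hlc.2]

end Aux

end Gossip
open Gossip in
/-- Lemma 2: monotonicity of `f_{π,π'}`: for `π, π' ∈ Π_{p,q}`,
`e, f ∈ E_q` with `e →* f`, if `f_{π,π'}(e)` and `f_{π,π'}(f)` are events
(neither `⊥` nor `⊤`), then `f_{π,π'}(e) ≤ f_{π,π'}(f)`. -/
theorem stmt4 {P A E : Type} [Fintype P] [Fintype A] (M : MSC P A E)
    (p q : P) (π π' : PathExpr P A)
    (hπ : pcomp π p q) (hπ' : pcomp π' p q)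
    (e f : E) (he : M.loc e = q) (hf : M.loc f = q)
    (hef : Relation.ReflTransGen M.next e f)
    (g h : E) (hg : IsFa M π π' e (ExtEv.evt g)) (hh : IsFa M π π' f (ExtEv.evt h)) :
    M.le g h := by
  rcases hg with ⟨_, hbot⟩ | ⟨g₁, hlast₁, hfirst₁⟩
  · cases hbot
  rcases hh with ⟨_, hbot⟩ | ⟨g₂, hlast₂, hfirst₂⟩
  · cases hbot
  obtain ⟨hpe, hmaxe⟩ := hlast₁
  obtain ⟨hpf, hmaxf⟩ := hlast₂
  obtain ⟨hqg, hming⟩ := hfirst₁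
  obtain ⟨hqh, hminh⟩ := hfirst₂
  have hg₁ : M.loc g₁ = p := pathSem_loc_bwd M π hpe hπ he
  have hg₂ : M.loc g₂ = p := pathSem_loc_bwd M π hpf hπ hf
  rcases M.next_total g₁ g₂ (hg₁.trans hg₂.symm) with h12 | h21
  · -- g₁ →* g₂
    have hlg : M.loc g = q := pathSem_loc_fwd M π' hqg hπ' hg₁
    have hlh : M.loc h = q := pathSem_loc_fwd M π' hqh hπ' hg₂
    rcases M.next_total g h (hlg.trans hlh.symm) with hgh | hhg
    · exact M.nextStar_le' hgh
    · have := (path_cross M π' hqg hqh h12 hhg).2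
      exact hming h this
  · -- g₂ →* g₁
    have hcross := (path_cross M π hpf hpe h21 hef).1
    have h1 : M.le g₁ g₂ := hmaxf g₁ hcross
    have h2 : M.le g₂ g₁ := M.nextStar_le' h21
    have : g₂ = g₁ := M.causal_antisymm h2 h1
    subst this
    exact hming h hqh
end

section
/- Let M be an MSC over P and Σ, let p, q ∈ P, let π, π' ∈ Π_{p,q}, and let f ∈ E_q such that there is no event e with e → f. Then π ≼_f π' if and only if last_π(f) = ⊥ or f_{π, →*π'}(f) = f, where →*π' denotes the path expression consisting of the letter →* followed by π'. -/
namespace Gossip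
variable {P A E : Type}

theorem MSC.le_of_nextStar (M : MSC P A E) {e f : E} (h : M.nextStar e f) : M.le e f :=
  Relation.ReflTransGen.mono (fun _ _ h => Or.inl h) e f h

theorem MSC.loc_eq_of_nextStar (M : MSC P A E) {e f : E} (h : M.nextStar e f) :
    M.loc e = M.loc f := by
  induction h with
  | refl => rfl
  | tail _ h ih => exact ih.trans (M.next_loc h)

theorem MSC.nextStar_of_le (M : MSC P A E) {e f : E} (h : M.le e f)
    (hl : M.loc e = M.loc f) : M.nextStar e f := by
  rcases M.next_total e f hl with h' | h'
  · exact h'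
  · have he : e = f := M.causal_antisymm h (M.le_of_nextStar h')
    exact he ▸ Relation.ReflTransGen.refl

theorem pathSem_pcomp (M : MSC P A E) (π : PathExpr P A) :
    ∀ {e g : E}, pathSem M π e g → pcomp π (M.loc e) (M.loc g) := by
  induction π with
  | nil => intro e g h; cases h; rfl
  | cons l π ih =>
    intro e g h
    obtain ⟨m, hl, hp⟩ := h
    refine ⟨M.loc m, ?_, ih hp⟩
    cases l with
    | next => exact M.next_loc hl
    | nextStar => exact M.loc_eq_of_nextStar hl
    | msg p q => exact ⟨hl.1, hl.2.1⟩
    | lab a => exact congrArg M.loc hl.1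

theorem pcomp_back_unique (π : PathExpr P A) :
    ∀ {a a' b : P}, pcomp π a b → pcomp π a' b → a = a' := by
  induction π with
  | nil => intro a a' b h h'; exact h.trans h'.symm
  | cons l π ih =>
    rintro a a' b ⟨y, hl, hp⟩ ⟨y', hl', hp'⟩
    have hy : y = y' := ih hp hp'
    cases l with
    | msg p q => exact hl.1.trans hl'.1.symm
    | next => exact hl.trans (hy.trans hl'.symm)
    | nextStar => exact hl.trans (hy.trans hl'.symm)
    | lab _ => exact hl.trans (hy.trans hl'.symm)

theorem pcomp_fwd_unique (π : PathExpr P A) :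
    ∀ {a b b' : P}, pcomp π a b → pcomp π a b' → b = b' := by
  induction π with
  | nil => intro a b b' h h'; exact h.symm.trans h'
  | cons l π ih =>
    rintro a b b' ⟨y, hl, hp⟩ ⟨y', hl', hp'⟩
    have hy : y = y' := by
      cases l with
      | msg p q => exact hl.2.trans hl'.2.symm
      | next => exact hl.symm.trans hl'
      | nextStar => exact hl.symm.trans hl'
      | lab _ => exact hl.symm.trans hl'
    exact ih hp (hy ▸ hp')

end Gossip

open Gossip in
/-- Lemma 3.1: if `f ∈ E_q` has no `→`-predecessor, then
`π ≼_f π'` iff `last_π(f) = ⊥` or `f_{π, →*π'}(f) = f`. -/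
theorem stmt6 {P A E : Type} [Fintype P] [Fintype A] (M : MSC P A E)
    (p q : P) (π π' : PathExpr P A)
    (hπ : pcomp π p q) (hπ' : pcomp π' p q)
    (f : E) (hf : M.loc f = q) (hmin : ¬ ∃ e, M.next e f)
    (x x' z : ExtEv E)
    (hx : IsLast M π f x) (hx' : IsLast M π' f x')
    (hz : IsFa M π (PathLetter.nextStar :: π') f z) :
    M.extLe x x' ↔ (x = ExtEv.bot ∨ z = ExtEv.evt f) := by
  have hqmin : ∀ m : E, M.loc m = q → M.le f m := by
    intro m hm
    rcases M.next_total f m (hf.trans hm.symm) with h | h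
    · exact M.le_of_nextStar h
    · rcases h.cases_tail with h | ⟨c, _, hc⟩
      · exact h ▸ Relation.ReflTransGen.refl
      · exact absurd ⟨c, hc⟩ hmin
  cases x with
  | top => exact hx.elim
  | bot => cases x' <;> exact iff_of_true trivial (Or.inl rfl)
  | evt g =>
    obtain ⟨hg, hgmax⟩ := hx
    have hz' : IsFirst M (PathLetter.nextStar :: π') g z := by
      rcases hz with ⟨hbot, _⟩ | ⟨g₂, ⟨hg₂, hg₂max⟩, hfst⟩
      · exact absurd hg (hbot g)
      · have hgg : g₂ = g := M.causal_antisymm (hgmax g₂ hg₂) (hg₂max g hg)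
        exact hgg ▸ hfst
    have locg : M.loc g = p := by
      have h1 := pathSem_pcomp M π hg
      rw [hf] at h1
      exact pcomp_back_unique π h1 hπ
    cases x' with
    | top => exact hx'.elim
    | bot =>
      refine iff_of_false (fun h => h) ?_
      rintro (h | h)
      · cases h
      · subst h
        obtain ⟨⟨h', hns, hp'⟩, _⟩ := hz'
        exact hx' h' hp'
    | evt g' =>
      obtain ⟨hg', hg'max⟩ := hx'
      have locg' : M.loc g' = p := by
        have h1 := pathSem_pcomp M π' hg'
        rw [hf] at h1
        exact pcomp_back_unique π' h1 hπ'
      constructor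
      · intro hle
        right
        have hns : M.nextStar g g' := M.nextStar_of_le hle (locg.trans locg'.symm)
        have hpath : pathSem M (PathLetter.nextStar :: π') g f := ⟨g', hns, hg'⟩
        cases z with
        | top => exact absurd hpath (hz' f)
        | bot => exact hz'.elim
        | evt m =>
          obtain ⟨hm, hmmin⟩ := hz'
          have locm : M.loc m = q := by
            have h1 := pathSem_pcomp M _ hm
            rw [locg] at h1
            exact pcomp_fwd_unique _ h1 ⟨p, rfl, hπ'⟩
          exact congrArg ExtEv.evt (M.causal_antisymm (hmmin f hpath) (hqmin m locm))
      · rintro (h | h)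
        · cases h
        · subst h
          obtain ⟨⟨h', hns, hp'⟩, _⟩ := hz'
          have hle : M.le h' g' := hg'max h' hp'
          have : M.nextStar h' g' :=
            M.nextStar_of_le hle (((M.loc_eq_of_nextStar hns).symm.trans locg).trans locg'.symm)
          exact M.le_of_nextStar (hns.trans this)
end
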